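/- arXiv:1312.1675 — 4 statements merged into one kernel-verified Lean document; each statement's English description precedes it below -/
import Mathlib

section
/- Let κ₀ > 0 and γ : [0,L] → ℂ be a curve parametrized by arc length with γ(0) = 0, γ'(0) = 1, and whose tangent-angle function θ (with θ(0) = 0 and γ'(s) = e^{iθ(s)}) is κ₀-Lipschitz. Fix α ∈ (0,π) and let A be the line through i/κ₀ with direction −i·e^{iα}. If γ(L) ∈ A, then L ≥ α/κ₀. -/
open Real in
lemma cos_aux {x y : ℝ} (hy0 : 0 ≤ y) (hyπ : y ≤ π) (hyx : y ≤ x)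
    (hx : x ≤ 2 * π - y) : Real.cos x ≤ Real.cos y := by
  rcases le_or_gt x π with h | h
  · exact Real.cos_le_cos_of_nonneg_of_le_pi hy0 h hyx
  · rw [← Real.cos_two_pi_sub x]
    exact Real.cos_le_cos_of_nonneg_of_le_pi hy0 (by linarith) (by linarith)

/-- Lower bound for the length of a curvature-constrained curve reaching the line A
    through i/κ₀ with direction −i·e^{iα}: if γ is arc-length parametrized with
    γ(0)=0, γ'(0)=1 (θ(0)=0), θ is κ₀-Lipschitz and γ(L) ∈ A with α ∈ (0,π),
    then L ≥ α/κ₀. -/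
theorem stmt5 (κ₀ L α : ℝ) (hκ : 0 < κ₀) (hL : 0 ≤ L) (hα : α ∈ Set.Ioo 0 Real.pi)
    (γ : ℝ → ℂ) (θ : ℝ → ℝ)
    (hγ0 : γ 0 = 0) (hθ0 : θ 0 = 0)
    (hlip : ∀ s₁ ∈ Set.Icc 0 L, ∀ s₂ ∈ Set.Icc 0 L, |θ s₁ - θ s₂| ≤ κ₀ * |s₁ - s₂|)
    (hγ : ∀ s ∈ Set.Icc 0 L, HasDerivAt γ (Complex.exp ((θ s : ℂ) * Complex.I)) s)
    (hend : ∃ t : ℝ, γ L = Complex.I / (κ₀ : ℂ)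
      + (t : ℂ) * (-Complex.I * Complex.exp ((α : ℂ) * Complex.I))) :
    α / κ₀ ≤ L := by
  obtain ⟨hα0, hαπ⟩ := hα
  by_contra hcon
  push_neg at hcon
  have hκL : κ₀ * L < α := by
    have := (lt_div_iff₀ hκ).mp hcon
    linarith
  -- f s = Re (e^{-iα} γ s)
  set f : ℝ → ℝ := fun s => (Complex.exp (-(α:ℂ) * Complex.I) * γ s).re with hf
  have hmemL : L ∈ Set.Icc (0:ℝ) L := ⟨hL, le_refl L⟩
  have hθb : ∀ s ∈ Set.Icc (0:ℝ) L, |θ s| ≤ κ₀ * s := by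
    intro s hs
    have := hlip s hs 0 ⟨le_refl 0, hL⟩
    simpa [hθ0, abs_of_nonneg hs.1] using this
  -- derivative of f
  have hfd : ∀ s ∈ Set.Icc (0:ℝ) L, HasDerivAt f (Real.cos (θ s - α)) s := by
    intro s hs
    have hg : HasDerivAt (fun s => Complex.exp (-(α:ℂ) * Complex.I) * γ s)
        (Complex.exp (-(α:ℂ) * Complex.I) * Complex.exp ((θ s : ℂ) * Complex.I)) s :=
      (hγ s hs).const_mul _
    have := Complex.reCLM.hasFDerivAt.comp_hasDerivAt s hg
    refine HasDerivAt.congr_deriv this ?_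
    symm
    rw [← Complex.exp_add]
    have : -(α:ℂ) * Complex.I + (θ s : ℂ) * Complex.I = ((θ s - α : ℝ) : ℂ) * Complex.I := by
      push_cast; ring
    rw [this]
    show _ = (Complex.exp (((θ s - α : ℝ) : ℂ) * Complex.I)).re
    rw [Complex.exp_ofReal_mul_I_re]
  -- continuity of θ on [0,L]
  have hθc : ContinuousOn θ (Set.Icc 0 L) := by
    intro s hs
    apply Metric.continuousWithinAt_iff.mpr
    intro ε hε
    refine ⟨ε / κ₀, by positivity, fun {y} hy hdist => ?_⟩
    have := hlip y hy s hs
    rw [Real.dist_eq]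
    calc |θ y - θ s| ≤ κ₀ * |y - s| := this
      _ < κ₀ * (ε / κ₀) := by
          apply mul_lt_mul_of_pos_left _ hκ
          rw [Real.dist_eq] at hdist; exact hdist
      _ = ε := by field_simp
  have hcc : ContinuousOn (fun s => Real.cos (θ s - α)) (Set.Icc 0 L) :=
    (Real.continuous_cos.comp_continuousOn (hθc.sub continuousOn_const))
  have hint1 : IntervalIntegrable (fun s => Real.cos (θ s - α)) MeasureTheory.volume 0 L :=
    (hcc.mono (by rw [Set.uIcc_of_le hL])).intervalIntegrable
  have hint2 : IntervalIntegrable (fun s => Real.cos (α - κ₀ * s)) MeasureTheory.volume 0 L :=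
    (Real.continuous_cos.comp (continuous_const.sub (continuous_const.mul continuous_id))).intervalIntegrable _ _
  -- FTC for f
  have hFTC : ∫ s in (0:ℝ)..L, Real.cos (θ s - α) = f L - f 0 := by
    apply intervalIntegral.integral_eq_sub_of_hasDerivAt
    · intro s hs
      rw [Set.uIcc_of_le hL] at hs
      exact hfd s hs
    · exact hint1
  -- f L = sin α / κ₀, f 0 = 0
  have hf0 : f 0 = 0 := by simp [hf, hγ0]
  have hfL : f L = Real.sin α / κ₀ := by
    obtain ⟨t, ht⟩ := hend
    have hfL' : f L = (Complex.exp (-(α:ℂ) * Complex.I) * γ L).re := rfl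
    rw [hfL', ht]
    have hκ' : (κ₀ : ℂ) ≠ 0 := by exact_mod_cast hκ.ne'
    rw [mul_add]
    rw [Complex.add_re]
    have h1 : (Complex.exp (-(α:ℂ) * Complex.I) * (Complex.I / (κ₀:ℂ))).re
        = Real.sin α / κ₀ := by
      rw [Complex.exp_mul_I]
      have : Complex.cos (-(α:ℂ)) + Complex.sin (-(α:ℂ)) * Complex.I
          = ((Real.cos α : ℂ)) - (Real.sin α : ℂ) * Complex.I := by
        push_cast [Complex.cos_neg, Complex.sin_neg]; ring
      rw [this]
      have : ((Real.cos α : ℂ) - (Real.sin α : ℂ) * Complex.I) * (Complex.I / (κ₀:ℂ))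
          = ((Real.sin α / κ₀ : ℝ) : ℂ) + ((Real.cos α / κ₀ : ℝ) : ℂ) * Complex.I := by
        rw [Complex.ofReal_div, Complex.ofReal_div]
        linear_combination (-(Real.sin α : ℂ) / (κ₀ : ℂ)) * Complex.I_mul_I
      rw [this]
      simp [Complex.sin_ofReal_re]
    have h2 : (Complex.exp (-(α:ℂ) * Complex.I) *
        ((t:ℂ) * (-Complex.I * Complex.exp ((α:ℂ) * Complex.I)))).re = 0 := by
      have : Complex.exp (-(α:ℂ) * Complex.I) *
          ((t:ℂ) * (-Complex.I * Complex.exp ((α:ℂ) * Complex.I)))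
          = (t:ℂ) * (-Complex.I) := by
        rw [show Complex.exp (-(α:ℂ) * Complex.I) *
            ((t:ℂ) * (-Complex.I * Complex.exp ((α:ℂ) * Complex.I)))
            = (t:ℂ) * (-Complex.I) * (Complex.exp (-(α:ℂ) * Complex.I) *
              Complex.exp ((α:ℂ) * Complex.I)) by ring, ← Complex.exp_add]
        simp
      rw [this]; simp
    rw [h1, h2, add_zero]
  -- pointwise bound
  have hpt : ∀ s ∈ Set.Icc (0:ℝ) L, Real.cos (θ s - α) ≤ Real.cos (α - κ₀ * s) := by
    intro s hs
    rw [← Real.cos_neg (θ s - α), neg_sub]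
    have hb := hθb s hs
    have h1 : |θ s| ≤ κ₀ * s := hb
    rw [abs_le] at h1
    have hs1 : κ₀ * s ≤ κ₀ * L := mul_le_mul_of_nonneg_left hs.2 hκ.le
    apply cos_aux
    · linarith
    · linarith
    · linarith [h1.2]
    · have : α + κ₀ * s ≤ 2 * Real.pi - (α - κ₀ * s) := by linarith
      linarith [h1.1]
  -- integral of rhs
  have hFTC2 : ∫ s in (0:ℝ)..L, Real.cos (α - κ₀ * s)
      = (Real.sin α - Real.sin (α - κ₀ * L)) / κ₀ := by
    have : ∀ s ∈ Set.uIcc (0:ℝ) L, HasDerivAt (fun s => -(Real.sin (α - κ₀ * s)) / κ₀)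
        (Real.cos (α - κ₀ * s)) s := by
      intro s _
      have hin : HasDerivAt (fun s : ℝ => α - κ₀ * s) (-κ₀) s := by
        exact ((hasDerivAt_const s α).sub ((hasDerivAt_id s).const_mul κ₀)).congr_deriv (by ring)
      have := ((Real.hasDerivAt_sin (α - κ₀ * s)).comp s hin).neg.div_const κ₀
      refine this.congr_deriv ?_
      field_simp
    rw [intervalIntegral.integral_eq_sub_of_hasDerivAt this hint2]
    simp
    ring
  have hmono := intervalIntegral.integral_mono_on hL hint1 hint2 hpt
  have hsinpos : 0 < Real.sin (α - κ₀ * L) := by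
    apply Real.sin_pos_of_pos_of_lt_pi
    · linarith
    · nlinarith [mul_nonneg hκ.le hL]
  rw [hFTC] at hmono
  rw [hFTC2] at hmono
  rw [hfL, hf0, sub_zero] at hmono
  rw [div_le_div_iff₀ hκ hκ] at hmono
  nlinarith
end

section
/- With the hypotheses of the previous statement (κ₀ = 1, γ arc-length parametrized, γ(0)=0, γ'(0)=1, θ 1-Lipschitz with θ(0)=0, α ∈ (0,π), γ(L) on the line A through i with direction −i e^{iα}), if L = α then γ(s) = i − i e^{is} for all s ∈ [0,α]; i.e., γ is the arc of the unit circle centered at i joining 0 to i − i e^{iα}. -/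
open Set Real


/-- Equality case: with κ₀ = 1, if the curve reaches the line A through i with
    direction −i·e^{iα} at length L = α, then γ is the arc of the unit circle centered
    at i joining 0 to i − i·e^{iα}: γ(s) = i − i·e^{is} for all s ∈ [0,α]. -/
theorem stmt6 (α : ℝ) (hα : α ∈ Set.Ioo 0 Real.pi)
    (γ : ℝ → ℂ) (θ : ℝ → ℝ)
    (hγ0 : γ 0 = 0) (hθ0 : θ 0 = 0)
    (hlip : ∀ s₁ ∈ Set.Icc 0 α, ∀ s₂ ∈ Set.Icc 0 α, |θ s₁ - θ s₂| ≤ |s₁ - s₂|)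
    (hγ : ∀ s ∈ Set.Icc 0 α, HasDerivAt γ (Complex.exp ((θ s : ℂ) * Complex.I)) s)
    (hend : ∃ t : ℝ, γ α = Complex.I
      + (t : ℂ) * (-Complex.I * Complex.exp ((α : ℂ) * Complex.I))) :
    ∀ s ∈ Set.Icc 0 α, γ s = Complex.I - Complex.I * Complex.exp ((s : ℂ) * Complex.I) := by
  obtain ⟨hα0, hαπ⟩ := hα
  obtain ⟨t, ht⟩ := hend
  set g : ℝ → ℂ := fun s => Complex.I - Complex.I * Complex.exp ((s:ℂ) * Complex.I) with hgdef
  have hgd : ∀ s : ℝ, HasDerivAt g (Complex.exp ((s:ℂ) * Complex.I)) s := by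
    intro s
    have h1 : HasDerivAt (fun x : ℝ => Complex.exp ((x:ℂ) * Complex.I))
        (Complex.exp ((s:ℂ) * Complex.I) * (1 * Complex.I)) s :=
      (((hasDerivAt_id s).ofReal_comp).mul_const Complex.I).cexp
    have h2 := (h1.const_mul Complex.I).const_sub Complex.I
    convert h2 using 1
    · rfl
    linear_combination (Complex.exp ((s:ℂ) * Complex.I)) * Complex.I_mul_I
  -- absolute bound on θ
  have hθabs : ∀ s ∈ Set.Icc (0:ℝ) α, |θ s| ≤ s := by
    intro s hs
    have := hlip s hs 0 ⟨le_refl 0, hα0.le⟩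
    rw [hθ0, sub_zero, sub_zero] at this
    rwa [abs_of_nonneg hs.1] at this
  -- the auxiliary function u
  set u : ℝ → ℝ := fun s => ((γ s - g s) * Complex.exp (-(α:ℂ) * Complex.I)).re with hudef
  have hud : ∀ s ∈ Set.Icc (0:ℝ) α,
      HasDerivAt u (Real.cos (θ s - α) - Real.cos (s - α)) s := by
    intro s hs
    have hd : HasDerivAt (fun x => (γ x - g x) * Complex.exp (-(α:ℂ) * Complex.I))
        ((Complex.exp ((θ s:ℂ) * Complex.I) - Complex.exp ((s:ℂ) * Complex.I))
          * Complex.exp (-(α:ℂ) * Complex.I)) s :=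
      ((hγ s hs).sub (hgd s)).mul_const _
    have h3 := Complex.reCLM.hasFDerivAt.comp_hasDerivAt s hd
    have e1 : (θ s : ℂ) * Complex.I + (-(α:ℂ) * Complex.I) = ((θ s - α : ℝ):ℂ) * Complex.I := by
      push_cast; ring
    have e2 : (s : ℂ) * Complex.I + (-(α:ℂ) * Complex.I) = ((s - α : ℝ):ℂ) * Complex.I := by
      push_cast; ring
    have h4 : Complex.reCLM ((Complex.exp ((θ s:ℂ) * Complex.I) - Complex.exp ((s:ℂ) * Complex.I))
          * Complex.exp (-(α:ℂ) * Complex.I)) = Real.cos (θ s - α) - Real.cos (s - α) := by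
      rw [Complex.reCLM_apply, sub_mul, ← Complex.exp_add, ← Complex.exp_add, e1, e2,
        Complex.sub_re, Complex.exp_ofReal_mul_I_re, Complex.exp_ofReal_mul_I_re]
    rw [h4] at h3
    exact h3
  have hu0 : u 0 = 0 := by
    simp [hudef, hγ0, hgdef, Complex.exp_zero]
  have hc : Complex.exp ((α:ℂ) * Complex.I) * Complex.exp (-(α:ℂ) * Complex.I) = 1 := by
    rw [← Complex.exp_add]
    norm_num
  have huα : u α = 0 := by
    have key : (γ α - g α) * Complex.exp (-(α:ℂ) * Complex.I) = (1 - (t:ℂ)) * Complex.I := by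
      rw [ht, hgdef]
      linear_combination (1 - (t:ℂ)) * Complex.I * hc
    simp only [hudef, key]
    simp [Complex.mul_re]
  -- pointwise cosine inequality
  have hcosle : ∀ s ∈ Set.Icc (0:ℝ) α, Real.cos (θ s - α) ≤ Real.cos (s - α) := by
    intro s hs
    obtain ⟨hs0, hsα⟩ := hs
    have habs := hθabs s ⟨hs0, hsα⟩
    have hθle : θ s ≤ s := (abs_le.mp habs).2
    have hθge : -s ≤ θ s := (abs_le.mp habs).1
    rw [show θ s - α = -(α - θ s) by ring, Real.cos_neg,
        show s - α = -(α - s) by ring, Real.cos_neg]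
    set x := α - θ s with hx
    set a := α - s with ha
    have ha0 : 0 ≤ a := by simp [ha]; linarith
    have haπ : a ≤ π := by simp [ha]; linarith
    have hax : a ≤ x := by simp [hx, ha]; linarith
    have hx2 : x ≤ α + s := by simp [hx]; linarith
    by_cases hxπ : x ≤ π
    · exact Real.cos_le_cos_of_nonneg_of_le_pi ha0 hxπ hax
    · push_neg at hxπ
      have h2x : x ≤ 2 * π - a := by
        have : α + s ≤ 2 * π - a := by simp [ha]; linarith
        linarith
      have := Real.cos_le_cos_of_nonneg_of_le_pi ha0 (by linarith : 2*π - x ≤ π)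
        (by linarith : a ≤ 2*π - x)
      calc Real.cos x = Real.cos (2*π - x) := by
            rw [Real.cos_two_pi_sub]
        _ ≤ Real.cos a := this
  -- u is antitone on [0,α]
  have hanti : AntitoneOn u (Set.Icc 0 α) := by
    apply antitoneOn_of_deriv_nonpos (convex_Icc 0 α)
    · exact fun x hx => (hud x hx).continuousAt.continuousWithinAt
    · intro x hx
      rw [interior_Icc] at hx
      exact (hud x (Ioo_subset_Icc_self hx)).differentiableAt.differentiableWithinAt
    · intro x hx
      rw [interior_Icc] at hx
      rw [(hud x (Ioo_subset_Icc_self hx)).deriv]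
      have := hcosle x (Ioo_subset_Icc_self hx)
      linarith
  have hzero : ∀ s ∈ Set.Icc (0:ℝ) α, u s = 0 := by
    intro s hs
    have h1 : u s ≤ u 0 := hanti ⟨le_refl 0, hα0.le⟩ hs hs.1
    have h2 : u α ≤ u s := hanti hs ⟨hα0.le, le_refl α⟩ hs.2
    linarith [hu0 ▸ h1, huα ▸ h2]
  -- θ s = s on the open interval
  have hθeq : ∀ s ∈ Set.Ioo (0:ℝ) α, θ s = s := by
    intro s hs
    have hne : HasDerivAt u 0 s := by
      have hev : u =ᶠ[nhds s] fun _ => (0:ℝ) := by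
        filter_upwards [Ioo_mem_nhds hs.1 hs.2] with x hx
        exact hzero x (Ioo_subset_Icc_self hx)
      exact (hasDerivAt_const s (0:ℝ)).congr_of_eventuallyEq hev
    have hder := hud s (Ioo_subset_Icc_self hs)
    have h0 : Real.cos (θ s - α) - Real.cos (s - α) = 0 := hder.unique hne
    have hcos : Real.cos (θ s - α) = Real.cos (s - α) := by linarith
    rw [Real.cos_eq_cos_iff] at hcos
    obtain ⟨k, hk | hk⟩ := hcos
    · -- s - α = 2kπ + (θ s - α)
      have habs := hθabs s (Ioo_subset_Icc_self hs)
      have hθle : θ s ≤ s := (abs_le.mp habs).2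
      have hθge : -s ≤ θ s := (abs_le.mp habs).1
      have hge : (0:ℝ) ≤ 2 * k * π := by linarith
      have hlt : 2 * (k:ℝ) * π < 2 * π := by nlinarith [Real.pi_pos, hs.1, hs.2]
      have hk0 : k = 0 := by
        have h1 : (0:ℝ) ≤ (k:ℝ) := by nlinarith [Real.pi_pos]
        have h2 : (k:ℝ) < 1 := by nlinarith [Real.pi_pos]
        have h1' : (0:ℤ) ≤ k := by exact_mod_cast h1
        have h2' : k < 1 := by exact_mod_cast h2
        omega
      rw [hk0] at hk
      push_cast at hk
      linarith
    · -- s - α = 2kπ - (θ s - α)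
      exfalso
      have habs := hθabs s (Ioo_subset_Icc_self hs)
      have hθle : θ s ≤ s := (abs_le.mp habs).2
      have hθge : -s ≤ θ s := (abs_le.mp habs).1
      -- θ s = 2kπ + 2α - s
      have hup : 2 * (k:ℝ) * π < 0 := by nlinarith [hs.1, hs.2]
      have hdown : -(2*π) < 2 * (k:ℝ) * π := by nlinarith [hs.1, hs.2]
      have hk1 : (k:ℝ) < 0 := by nlinarith [Real.pi_pos]
      have hk1' : k < 0 := by exact_mod_cast hk1
      have hk2 : (k:ℝ) ≤ -1 := by exact_mod_cast (by omega : k ≤ -1)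
      nlinarith [Real.pi_pos]
  -- conclude via uniqueness of solutions of the ODE
  have contγ : ContinuousOn γ (Set.Icc 0 α) :=
    fun x hx => (hγ x hx).continuousAt.continuousWithinAt
  have contg : ContinuousOn g (Set.Icc 0 α) :=
    fun x hx => (hgd x).continuousAt.continuousWithinAt
  have derivγ : ∀ x ∈ Set.Ico (0:ℝ) α,
      HasDerivWithinAt γ (Complex.exp ((x:ℂ) * Complex.I)) (Set.Ici x) x := by
    intro x hx
    have hθx : θ x = x := by
      rcases eq_or_lt_of_le hx.1 with h | h
      · rw [← h, hθ0]
      · exact hθeq x ⟨h, hx.2⟩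
    have := hγ x ⟨hx.1, hx.2.le⟩
    rw [hθx] at this
    exact this.hasDerivWithinAt
  have derivg : ∀ x ∈ Set.Ico (0:ℝ) α,
      HasDerivWithinAt g (Complex.exp ((x:ℂ) * Complex.I)) (Set.Ici x) x :=
    fun x _ => (hgd x).hasDerivWithinAt
  have hinit : γ 0 = g 0 := by
    rw [hγ0, hgdef]
    simp
  exact eq_of_has_deriv_right_eq derivγ derivg contγ contg hinit
end

section
/- Let γ : [0,L] → ℂ be a condensed curve parametrized by arc length with amplitude ω = sup θ − inf θ < π (θ the continuous tangent argument), let q ∈ ℂ be its endpoint displacement γ(L) − γ(0), and let φ̄ = (sup θ + inf θ)/2. Then L ≤ |q| · sec(ω/2). -/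
/-- Length bound for a condensed curve: if the amplitude ω = sup θ − inf θ of the
    tangent argument satisfies ω < π, then L ≤ |γ(L) − γ(0)| · sec(ω/2). -/
theorem stmt12 (L : ℝ) (hL : 0 ≤ L) (γ : ℝ → ℂ) (θ : ℝ → ℝ)
    (hγ : ∀ s ∈ Set.Icc 0 L, HasDerivAt γ (Complex.exp ((θ s : ℂ) * Complex.I)) s)
    (hθc : ContinuousOn θ (Set.Icc 0 L))
    (ω : ℝ) (hω : ω = sSup (θ '' Set.Icc 0 L) - sInf (θ '' Set.Icc 0 L))
    (hωπ : ω < Real.pi) :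
    L ≤ ‖γ L - γ 0‖ / Real.cos (ω / 2) := by
  set M := sSup (θ '' Set.Icc 0 L) with hM
  set m := sInf (θ '' Set.Icc 0 L) with hm
  set φ : ℝ := (M + m) / 2 with hφ
  have h0mem : (0:ℝ) ∈ Set.Icc 0 L := ⟨le_refl 0, hL⟩
  have hne : (θ '' Set.Icc 0 L).Nonempty := ⟨θ 0, ⟨0, h0mem, rfl⟩⟩
  have hcpt : IsCompact (θ '' Set.Icc 0 L) := (isCompact_Icc).image_of_continuousOn hθc
  have hba : BddAbove (θ '' Set.Icc 0 L) := hcpt.bddAbove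
  have hbb : BddBelow (θ '' Set.Icc 0 L) := hcpt.bddBelow
  have hub : ∀ s ∈ Set.Icc 0 L, θ s ≤ M := fun s hs => le_csSup hba ⟨s, hs, rfl⟩
  have hlb : ∀ s ∈ Set.Icc 0 L, m ≤ θ s := fun s hs => csInf_le hbb ⟨s, hs, rfl⟩
  have hω0 : 0 ≤ ω := by
    rw [hω]; linarith [hub 0 h0mem, hlb 0 h0mem]
  have hcos : 0 < Real.cos (ω / 2) := by
    apply Real.cos_pos_of_mem_Ioo
    constructor <;> [linarith [Real.pi_pos]; linarith]
  -- bound on |θ s - φ|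
  have hbd : ∀ s ∈ Set.Icc 0 L, |θ s - φ| ≤ ω / 2 := by
    intro s hs
    rw [abs_le, hφ, hω]
    constructor <;> [linarith [hlb s hs]; linarith [hub s hs]]
  have hcosbd : ∀ s ∈ Set.Icc 0 L, Real.cos (ω / 2) ≤ Real.cos (θ s - φ) := by
    intro s hs
    rw [← Real.cos_abs (θ s - φ)]
    apply Real.cos_le_cos_of_nonneg_of_le_pi (abs_nonneg _) (by linarith) (hbd s hs)
  have huIcc : Set.uIcc (0:ℝ) L = Set.Icc 0 L := Set.uIcc_of_le hL
  have hcont : ContinuousOn (fun s => Complex.exp ((θ s : ℂ) * Complex.I)) (Set.Icc 0 L) := by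
    exact Complex.continuous_exp.comp_continuousOn
      (((Complex.continuous_ofReal.comp_continuousOn hθc).mul continuousOn_const))
  have hint : IntervalIntegrable (fun s => Complex.exp ((θ s : ℂ) * Complex.I))
      MeasureTheory.volume 0 L := by
    apply ContinuousOn.intervalIntegrable; rwa [huIcc]
  have hftc : ∫ s in (0:ℝ)..L, Complex.exp ((θ s : ℂ) * Complex.I) = γ L - γ 0 :=
    intervalIntegral.integral_eq_sub_of_hasDerivAt (fun s hs => hγ s (huIcc ▸ hs)) hint
  -- the real part
  have hre : ((γ L - γ 0) * Complex.exp (-(φ:ℂ) * Complex.I)).re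
      = ∫ s in (0:ℝ)..L, Real.cos (θ s - φ) := by
    have hcomm := Complex.reCLM.intervalIntegral_comp_comm (μ := MeasureTheory.volume)
      (a := 0) (b := L) (hint.mul_const (Complex.exp (-(φ:ℂ) * Complex.I)))
    rw [← hftc, ← intervalIntegral.integral_mul_const, ← Complex.reCLM_apply, ← hcomm]
    apply intervalIntegral.integral_congr
    intro s _
    simp only [← Complex.exp_add]
    have : (θ s : ℂ) * Complex.I + -(φ:ℂ) * Complex.I = ((θ s - φ : ℝ) : ℂ) * Complex.I := by
      push_cast; ring
    rw [this]
    simpa using Complex.exp_ofReal_mul_I_re (θ s - φ)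
  have hcosint : IntervalIntegrable (fun s => Real.cos (θ s - φ)) MeasureTheory.volume 0 L := by
    apply ContinuousOn.intervalIntegrable
    rw [huIcc]
    exact Real.continuous_cos.comp_continuousOn (hθc.sub continuousOn_const)
  have hmono : L * Real.cos (ω / 2) ≤ ∫ s in (0:ℝ)..L, Real.cos (θ s - φ) := by
    have := intervalIntegral.integral_mono_on hL (intervalIntegrable_const
      (c := Real.cos (ω/2))) hcosint hcosbd
    simpa using this
  have habs : ((γ L - γ 0) * Complex.exp (-(φ:ℂ) * Complex.I)).re ≤ ‖γ L - γ 0‖ := by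
    calc ((γ L - γ 0) * Complex.exp (-(φ:ℂ) * Complex.I)).re
        ≤ ‖(γ L - γ 0) * Complex.exp (-(φ:ℂ) * Complex.I)‖ := Complex.re_le_norm _
      _ = ‖γ L - γ 0‖ := by
          rw [norm_mul]
          have : -(φ:ℂ) * Complex.I = ((-φ : ℝ) : ℂ) * Complex.I := by push_cast; ring
          rw [this, Complex.norm_exp_ofReal_mul_I, mul_one]
  rw [le_div_iff₀ hcos]
  linarith [hre ▸ habs, hmono]
end

section
/- Let θ₁ ∈ [0,π], z = e^{iθ₁}, ω ∈ [θ₁, π], and r(ω) = 4 sin(ω/2). Suppose η : [0,L] → ℂ is parametrized by arc length with η(0) = 0, η'(0) = 1, η'(L) = z, its tangent-argument θ (θ(0)=0, θ(L)=θ₁) is 1-Lipschitz, and its amplitude sup θ − inf θ equals ω. Then |η(L) − (i(z−1))| ≥ r(ω); i.e., the endpoint of η cannot lie strictly inside the circle of radius 4 sin(ω/2) centered at −i + iz. -/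
open Set intervalIntegral

lemma cos_lip' (a b : ℝ) : |Real.cos a - Real.cos b| ≤ |a - b| := by
  rw [Real.cos_sub_cos]
  rw [abs_mul, abs_mul]
  have h1 : |Real.sin ((a + b) / 2)| ≤ 1 :=
    abs_le.mpr ⟨Real.neg_one_le_sin _, Real.sin_le_one _⟩
  have h2 : |Real.sin ((a - b) / 2)| ≤ |(a - b) / 2| := Real.abs_sin_le_abs
  have h3 : |(a - b) / 2| = |a - b| / 2 := by rw [abs_div]; norm_num
  have h4 : |(-2 : ℝ)| = 2 := by norm_num
  calc |(-2 : ℝ)| * |Real.sin ((a + b) / 2)| * |Real.sin ((a - b) / 2)|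
      ≤ 2 * 1 * (|a - b| / 2) := by
        rw [h4]
        apply mul_le_mul _ (h3 ▸ h2) (abs_nonneg _) (by positivity)
        nlinarith [abs_nonneg (Real.sin ((a+b)/2))]
    _ = |a - b| := by ring

open Set intervalIntegral

lemma amp_step (L : ℝ) (ψ : ℝ → ℝ)
    (hc : ContinuousOn ψ (Set.Icc 0 L))
    (hlip : ∀ s₁ ∈ Set.Icc 0 L, ∀ s₂ ∈ Set.Icc 0 L, |ψ s₁ - ψ s₂| ≤ |s₁ - s₂|)
    (hbd : ∀ s ∈ Set.Icc 0 L, |ψ s| ≤ Real.pi / 2)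
    {c d : ℝ} (hc0 : c ∈ Set.Icc 0 L) (hd0 : d ∈ Set.Icc 0 L) (hcd : c ≤ d) :
    |Real.sin (ψ d) - Real.sin (ψ c)|
      ≤ (∫ t in c..d, Real.cos (ψ t)) + 2 * (d - c) ^ 2 := by
  have hsub : Set.Icc c d ⊆ Set.Icc 0 L := Set.Icc_subset_Icc hc0.1 hd0.2
  set x := ψ c with hx
  set y := ψ d with hy
  set h := d - c with hh
  have hh0 : 0 ≤ h := by simp only [hh]; linarith
  set mid := (y + x) / 2 with hmid
  have hxb : |x| ≤ Real.pi / 2 := hbd c hc0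
  have hyb : |y| ≤ Real.pi / 2 := hbd d hd0
  have hyx : |y - x| ≤ h := by
    have h5 := hlip d hd0 c hc0
    rw [abs_of_nonneg (by linarith : (0:ℝ) ≤ d - c)] at h5
    exact h5
  have hmidb : |mid| ≤ Real.pi / 2 := by
    rw [hmid]
    rw [abs_div]
    have : |y + x| ≤ |y| + |x| := abs_add_le _ _
    rw [abs_two]
    linarith
  have hcosmid : 0 ≤ Real.cos mid :=
    Real.cos_nonneg_of_mem_Icc (abs_le.mp hmidb |> fun p => ⟨p.1, p.2⟩)
  -- step 1 : |sin y - sin x| ≤ h * cos mid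
  have h1 : |Real.sin y - Real.sin x| ≤ h * Real.cos mid := by
    rw [Real.sin_sub_sin]
    have hmid' : (y + x) / 2 = mid := hmid.symm
    rw [hmid', abs_mul, abs_mul, abs_two, abs_of_nonneg hcosmid]
    have h2 : |Real.sin ((y - x) / 2)| ≤ |(y - x) / 2| := Real.abs_sin_le_abs
    have h3 : |(y - x) / 2| ≤ h / 2 := by rw [abs_div, abs_two]; linarith
    nlinarith
  -- step 2 : pointwise bound on cos
  have h2 : ∀ t ∈ Set.Icc c d, Real.cos mid - 2 * h ≤ Real.cos (ψ t) := by
    intro t ht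
    have htL : t ∈ Set.Icc 0 L := hsub ht
    have l1 : |ψ t - x| ≤ h := by
      have := hlip t htL c hc0
      have habs : |t - c| ≤ h := by
        rw [abs_of_nonneg (by linarith [ht.1] : (0:ℝ) ≤ t - c)]
        linarith [ht.2]
      exact this.trans habs
    have l2 : |x - mid| ≤ h / 2 := by
      have : x - mid = (x - y) / 2 := by rw [hmid]; ring
      rw [this, abs_div, abs_two, abs_sub_comm]
      linarith
    have l3 : |mid - ψ t| ≤ 2 * h := by
      have := abs_sub_le mid x (ψ t)
      rw [abs_sub_comm mid x] at this
      rw [abs_sub_comm x (ψ t)] at this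
      linarith
    have := cos_lip' mid (ψ t)
    have := abs_le.mp (this.trans l3)
    linarith [this.1, this.2]
  -- step 3 : integral bound
  have hcont : ContinuousOn (fun t => Real.cos (ψ t)) (Set.Icc c d) :=
    Real.continuous_cos.comp_continuousOn (hc.mono hsub)
  have h3 : h * (Real.cos mid - 2 * h) ≤ ∫ t in c..d, Real.cos (ψ t) := by
    have hint : IntervalIntegrable (fun t => Real.cos (ψ t)) MeasureTheory.volume c d := by
      apply ContinuousOn.intervalIntegrable
      rwa [Set.uIcc_of_le hcd]
    have := intervalIntegral.integral_mono_on hcd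
      (_root_.intervalIntegrable_const (c := Real.cos mid - 2 * h)) hint h2
    rw [intervalIntegral.integral_const] at this
    rw [smul_eq_mul] at this
    rw [hh]
    exact this
  nlinarith

open Set intervalIntegral

lemma amp_key (L : ℝ) (ψ : ℝ → ℝ)
    (hc : ContinuousOn ψ (Set.Icc 0 L))
    (hlip : ∀ s₁ ∈ Set.Icc 0 L, ∀ s₂ ∈ Set.Icc 0 L, |ψ s₁ - ψ s₂| ≤ |s₁ - s₂|)
    (hbd : ∀ s ∈ Set.Icc 0 L, |ψ s| ≤ Real.pi / 2)
    {a b : ℝ} (ha : a ∈ Set.Icc 0 L) (hb : b ∈ Set.Icc 0 L) (hab : a ≤ b) :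
    |Real.sin (ψ b) - Real.sin (ψ a)| ≤ ∫ t in a..b, Real.cos (ψ t) := by
  refine le_of_forall_pos_le_add ?_
  intro ε hε
  obtain ⟨n, hn⟩ := exists_nat_gt (2 * (b - a) ^ 2 / ε)
  set N : ℕ := n + 1 with hN
  set δ : ℝ := (b - a) / N with hδ
  have hN0 : (0:ℝ) < N := by positivity
  have hδ0 : 0 ≤ δ := by
    apply div_nonneg (by linarith) hN0.le
  set p : ℕ → ℝ := fun k => a + k * δ with hp
  have hp0 : p 0 = a := by simp [hp]
  have hpN : p N = b := by
    simp only [hp, hδ]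
    field_simp
    ring
  have hpstep : ∀ k : ℕ, p (k + 1) - p k = δ := by
    intro k; simp only [hp]; push_cast; ring
  have hpmono : ∀ k l : ℕ, k ≤ l → p k ≤ p l := by
    intro k l hkl
    simp only [hp]
    have : (k:ℝ) ≤ l := by exact_mod_cast hkl
    nlinarith
  have hpmem : ∀ k : ℕ, k ≤ N → p k ∈ Set.Icc 0 L := by
    intro k hk
    constructor
    · have := hpmono 0 k (Nat.zero_le k); rw [hp0] at this; linarith [ha.1]
    · have := hpmono k N hk; rw [hpN] at this; linarith [hb.2]
  have hint : ∀ k : ℕ, k < N → IntervalIntegrable (fun t => Real.cos (ψ t))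
      MeasureTheory.volume (p k) (p (k+1)) := by
    intro k hk
    apply ContinuousOn.intervalIntegrable
    apply (Real.continuous_cos.comp_continuousOn (hc.mono ?_))
    rw [Set.uIcc_of_le (by linarith [hpstep k] : p k ≤ p (k+1))]
    exact Set.Icc_subset_Icc (hpmem k hk.le).1 (hpmem (k+1) hk).2
  have hsum := intervalIntegral.sum_integral_adjacent_intervals (μ := MeasureTheory.volume)
    (a := p) (n := N) hint
  rw [hp0, hpN] at hsum
  -- telescoping
  have htel : Real.sin (ψ b) - Real.sin (ψ a)
      = ∑ k ∈ Finset.range N, (Real.sin (ψ (p (k+1))) - Real.sin (ψ (p k))) := by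
    rw [Finset.sum_range_sub (fun k => Real.sin (ψ (p k)))]
    rw [hp0, hpN]
  have hbound : |Real.sin (ψ b) - Real.sin (ψ a)|
      ≤ ∑ k ∈ Finset.range N, ((∫ t in p k..p (k+1), Real.cos (ψ t)) + 2 * δ ^ 2) := by
    rw [htel]
    refine (Finset.abs_sum_le_sum_abs _ _).trans ?_
    apply Finset.sum_le_sum
    intro k hk
    have hk' := Finset.mem_range.mp hk
    have := amp_step L ψ hc hlip hbd (hpmem k hk'.le) (hpmem (k+1) hk') 
      (by linarith [hpstep k])
    rwa [hpstep k] at this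
  rw [Finset.sum_add_distrib, hsum, Finset.sum_const, Finset.card_range] at hbound
  refine hbound.trans ?_
  have hfin : N • (2 * δ ^ 2) ≤ ε := by
    rw [nsmul_eq_mul]
    have h1 : 2 * (b - a) ^ 2 < N * ε := by
      rw [div_lt_iff₀ hε] at hn
      have : (n : ℝ) * ε ≤ N * ε := by
        apply mul_le_mul_of_nonneg_right _ hε.le
        exact_mod_cast Nat.le_succ n
      linarith
    have : (N:ℝ) * (2 * δ ^ 2) = 2 * (b-a)^2 / N := by
      rw [hδ]; field_simp
    rw [this]
    rw [div_le_iff₀ hN0]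
    nlinarith
  linarith

open Set intervalIntegral

lemma ftc_re (L φ : ℝ) (η : ℝ → ℂ) (θ : ℝ → ℝ)
    (hη : ∀ s ∈ Set.Icc 0 L, HasDerivAt η (Complex.exp ((θ s : ℂ) * Complex.I)) s)
    (hθc : ContinuousOn θ (Set.Icc 0 L))
    {a b : ℝ} (ha : a ∈ Set.Icc 0 L) (hb : b ∈ Set.Icc 0 L) (hab : a ≤ b) :
    (Complex.exp (-(φ:ℂ) * Complex.I) * (η b - η a)).re
      = ∫ t in a..b, Real.cos (θ t - φ) := by
  set c : ℂ := Complex.exp (-(φ:ℂ) * Complex.I) with hcdef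
  have hsub : Set.Icc a b ⊆ Set.Icc 0 L := Set.Icc_subset_Icc ha.1 hb.2
  have hg : ∀ s ∈ Set.uIcc a b,
      HasDerivAt (fun s => (c * η s).re) (Real.cos (θ s - φ)) s := by
    intro s hs
    rw [Set.uIcc_of_le hab] at hs
    have hd := ((hη s (hsub hs)).const_mul c)
    have hcomp := Complex.reCLM.hasFDerivAt.comp_hasDerivAt s hd
    have hval : Complex.reCLM (c * Complex.exp ((θ s : ℂ) * Complex.I))
        = Real.cos (θ s - φ) := by
      rw [hcdef, ← Complex.exp_add]
      have : -(φ:ℂ) * Complex.I + (θ s : ℂ) * Complex.I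
          = ((θ s - φ : ℝ) : ℂ) * Complex.I := by push_cast; ring
      rw [this]
      simpa using Complex.exp_ofReal_mul_I_re (θ s - φ)
    rw [hval] at hcomp
    exact hcomp
  have hint : IntervalIntegrable (fun t => Real.cos (θ t - φ)) MeasureTheory.volume a b := by
    apply ContinuousOn.intervalIntegrable
    apply Real.continuous_cos.comp_continuousOn
    apply ContinuousOn.sub _ continuousOn_const
    rw [Set.uIcc_of_le hab]
    exact hθc.mono hsub
  have := intervalIntegral.integral_eq_sub_of_hasDerivAt hg hint
  rw [this, mul_sub, Complex.sub_re]

/-- If a curve in 𝓛₋₁⁺¹(Q;θ₁) has amplitude ω ∈ [θ₁, π], then its endpoint cannot lie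
    strictly inside the circle of radius 4·sin(ω/2) centered at −i + iz = i(z−1). -/
theorem stmt16 (θ₁ ω L : ℝ) (h1 : 0 ≤ θ₁) (h2 : θ₁ ≤ Real.pi)
    (h3 : θ₁ ≤ ω) (h4 : ω ≤ Real.pi) (hL : 0 ≤ L)
    (η : ℝ → ℂ) (θ : ℝ → ℝ)
    (hη0 : η 0 = 0) (hθ0 : θ 0 = 0) (hθL : θ L = θ₁)
    (hη : ∀ s ∈ Set.Icc 0 L, HasDerivAt η (Complex.exp ((θ s : ℂ) * Complex.I)) s)
    (hθc : ContinuousOn θ (Set.Icc 0 L))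
    (hlip : ∀ s₁ ∈ Set.Icc 0 L, ∀ s₂ ∈ Set.Icc 0 L, |θ s₁ - θ s₂| ≤ |s₁ - s₂|)
    (hamp : sSup (θ '' Set.Icc 0 L) - sInf (θ '' Set.Icc 0 L) = ω) :
    4 * Real.sin (ω / 2)
      ≤ ‖η L - Complex.I * (Complex.exp ((θ₁ : ℂ) * Complex.I) - 1)‖ := by
  have h0S : (0:ℝ) ∈ Set.Icc 0 L := ⟨le_refl _, hL⟩
  have hLS : L ∈ Set.Icc 0 L := ⟨hL, le_refl _⟩
  have hω0 : 0 ≤ ω := h1.trans h3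
  have hωπ : ω / 2 ≤ Real.pi / 2 := by linarith
  have hKcpt : IsCompact (θ '' Set.Icc 0 L) := isCompact_Icc.image_of_continuousOn hθc
  have hne : (θ '' Set.Icc 0 L).Nonempty := ⟨θ 0, Set.mem_image_of_mem θ h0S⟩
  set M := sSup (θ '' Set.Icc 0 L) with hMdef
  set m := sInf (θ '' Set.Icc 0 L) with hmdef
  obtain ⟨p, hpS, hpθ⟩ := hKcpt.sSup_mem hne
  obtain ⟨q, hqS, hqθ⟩ := hKcpt.sInf_mem hne
  have hub : ∀ s ∈ Set.Icc 0 L, θ s ≤ M :=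
    fun s hs => le_csSup hKcpt.bddAbove (Set.mem_image_of_mem θ hs)
  have hlb : ∀ s ∈ Set.Icc 0 L, m ≤ θ s :=
    fun s hs => csInf_le hKcpt.bddBelow (Set.mem_image_of_mem θ hs)
  have hm0 : m ≤ 0 := by have := hlb 0 h0S; rwa [hθ0] at this
  have hMθ₁ : θ₁ ≤ M := by have := hub L hLS; rwa [hθL] at this
  have hMm : M - m = ω := hamp
  set φ := m + ω / 2 with hφdef
  set ψ : ℝ → ℝ := fun s => θ s - φ with hψdef
  have hψrange : ∀ s ∈ Set.Icc 0 L, -(ω/2) ≤ ψ s ∧ ψ s ≤ ω/2 := by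
    intro s hs
    have l1 := hlb s hs
    have l2 := hub s hs
    constructor <;> simp only [hψdef, hφdef] <;> linarith
  have hψc : ContinuousOn ψ (Set.Icc 0 L) := hθc.sub continuousOn_const
  have hψlip : ∀ s₁ ∈ Set.Icc 0 L, ∀ s₂ ∈ Set.Icc 0 L, |ψ s₁ - ψ s₂| ≤ |s₁ - s₂| := by
    intro s₁ hs₁ s₂ hs₂
    have := hlip s₁ hs₁ s₂ hs₂
    simpa [hψdef] using this
  have hψbd : ∀ s ∈ Set.Icc 0 L, |ψ s| ≤ Real.pi / 2 := by
    intro s hs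
    obtain ⟨l1, l2⟩ := hψrange s hs
    rw [abs_le]
    constructor <;> linarith
  have key : ∀ a ∈ Set.Icc 0 L, ∀ b ∈ Set.Icc 0 L, a ≤ b →
      |Real.sin (ψ b) - Real.sin (ψ a)| ≤ ∫ t in a..b, Real.cos (ψ t) :=
    fun a ha b hb hab => amp_key L ψ hψc hψlip hψbd ha hb hab
  have hInt : ∀ a ∈ Set.Icc 0 L, ∀ b ∈ Set.Icc 0 L,
      IntervalIntegrable (fun t => Real.cos (ψ t)) MeasureTheory.volume a b := by
    intro a ha b hb
    apply ContinuousOn.intervalIntegrable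
    apply Real.continuous_cos.comp_continuousOn
    exact hψc.mono (Set.uIcc_subset_Icc ha hb)
  -- values of sin ψ at special points
  have hψp : ψ p = ω / 2 := by simp only [hψdef, hφdef]; rw [hpθ]; linarith
  have hψq : ψ q = -(ω / 2) := by simp only [hψdef, hφdef]; rw [hqθ]; linarith
  have hψ0 : ψ 0 = -φ := by simp only [hψdef]; rw [hθ0]; ring
  have hψL : ψ L = θ₁ - φ := by simp only [hψdef]; rw [hθL]
  set H := Real.sin (ω / 2) with hHdef
  have hsinq : Real.sin (ψ q) = -H := by rw [hψq, Real.sin_neg]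
  have hsinp : Real.sin (ψ p) = H := by rw [hψp]
  -- main estimate
  have hmain : 4 * H ≤ (∫ t in (0:ℝ)..L, Real.cos (ψ t))
      + Real.sin (θ₁ - φ) - Real.sin (-φ) := by
    rcases le_total q p with hqp | hpq
    · -- min attained before max
      have hsplit : (∫ t in (0:ℝ)..L, Real.cos (ψ t))
          = (∫ t in (0:ℝ)..q, Real.cos (ψ t)) + (∫ t in q..p, Real.cos (ψ t))
            + (∫ t in p..L, Real.cos (ψ t)) := by
        rw [intervalIntegral.integral_add_adjacent_intervals (hInt 0 h0S q hqS) (hInt q hqS p hpS),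
          intervalIntegral.integral_add_adjacent_intervals (hInt 0 h0S p hpS) (hInt p hpS L hLS)]
      have k1 := key 0 h0S q hqS hqS.1
      have k2 := key q hqS p hpS hqp
      have k3 := key p hpS L hLS hpS.2
      have b1 : Real.sin (ψ 0) - Real.sin (ψ q) ≤ ∫ t in (0:ℝ)..q, Real.cos (ψ t) :=
        le_trans (by rw [← neg_sub]; exact neg_le_abs _) k1
      have b2 : Real.sin (ψ p) - Real.sin (ψ q) ≤ ∫ t in q..p, Real.cos (ψ t) :=
        le_trans (le_abs_self _) k2
      have b3 : Real.sin (ψ p) - Real.sin (ψ L) ≤ ∫ t in p..L, Real.cos (ψ t) :=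
        le_trans (by rw [← neg_sub]; exact neg_le_abs _) k3
      rw [hsplit, hψ0, hψL] at *
      rw [hsinp, hsinq] at *
      linarith [b1, b2, b3]
    · -- max attained before min
      have hsplit : (∫ t in (0:ℝ)..L, Real.cos (ψ t))
          = (∫ t in (0:ℝ)..p, Real.cos (ψ t)) + (∫ t in p..q, Real.cos (ψ t))
            + (∫ t in q..L, Real.cos (ψ t)) := by
        rw [intervalIntegral.integral_add_adjacent_intervals (hInt 0 h0S p hpS) (hInt p hpS q hqS),
          intervalIntegral.integral_add_adjacent_intervals (hInt 0 h0S q hqS) (hInt q hqS L hLS)]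
      have k1 := key 0 h0S p hpS hpS.1
      have k2 := key p hpS q hqS hpq
      have k3 := key q hqS L hLS hqS.2
      have b1 : Real.sin (ψ p) - Real.sin (ψ 0) ≤ ∫ t in (0:ℝ)..p, Real.cos (ψ t) :=
        le_trans (le_abs_self _) k1
      have b2 : Real.sin (ψ p) - Real.sin (ψ q) ≤ ∫ t in p..q, Real.cos (ψ t) :=
        le_trans (by rw [← neg_sub]; exact neg_le_abs _) k2
      have b3 : Real.sin (ψ L) - Real.sin (ψ q) ≤ ∫ t in q..L, Real.cos (ψ t) :=
        le_trans (le_abs_self _) k3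
      have hsinmono : Real.sin (-φ) ≤ Real.sin (θ₁ - φ) := by
        apply Real.sin_le_sin_of_le_of_le_pi_div_two
        · simp only [hφdef]; linarith
        · simp only [hφdef]; linarith
        · linarith
      rw [hsplit, hψ0, hψL] at *
      rw [hsinp, hsinq] at *
      linarith [b1, b2, b3, hsinmono]
  -- conclude
  set c : ℂ := Complex.exp (-(φ:ℂ) * Complex.I) with hcdef
  set W : ℂ := η L - Complex.I * (Complex.exp ((θ₁ : ℂ) * Complex.I) - 1) with hWdef
  have e1 : Complex.I * Complex.exp ((((θ₁ - φ) : ℝ) : ℂ) * Complex.I)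
      = c * (Complex.I * Complex.exp ((θ₁:ℂ) * Complex.I)) := by
    rw [hcdef, mul_left_comm, ← Complex.exp_add]
    push_cast
    ring_nf
  have e2 : Complex.I * Complex.exp ((((-φ) : ℝ) : ℂ) * Complex.I) = c * Complex.I := by
    rw [hcdef]
    push_cast
    ring_nf
  have harg : c * W = c * (η L - η 0)
      - Complex.I * Complex.exp ((((θ₁ - φ) : ℝ) : ℂ) * Complex.I)
      + Complex.I * Complex.exp ((((-φ) : ℝ) : ℂ) * Complex.I) := by
    rw [e1, e2, hη0, hWdef]
    ring
  have hre1 : (c * (η L - η 0)).re = ∫ t in (0:ℝ)..L, Real.cos (θ t - φ) :=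
    ftc_re L φ η θ hη hθc h0S hLS hL
  have hreI : ∀ x : ℝ, (Complex.I * Complex.exp ((x : ℂ) * Complex.I)).re = -Real.sin x := by
    intro x
    rw [Complex.mul_re, Complex.I_re, Complex.I_im, Complex.exp_ofReal_mul_I_re,
      Complex.exp_ofReal_mul_I_im]
    ring
  have hre : (c * W).re = (∫ t in (0:ℝ)..L, Real.cos (ψ t))
      + Real.sin (θ₁ - φ) - Real.sin (-φ) := by
    rw [harg, Complex.add_re, Complex.sub_re, hre1, hreI, hreI]
    simp only [hψdef]
    ring
  have habs : ‖c * W‖ = ‖W‖ := by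
    rw [norm_mul, hcdef, Complex.norm_exp]
    simp
  calc 4 * Real.sin (ω / 2) = 4 * H := rfl
    _ ≤ (c * W).re := by rw [hre]; exact hmain
    _ ≤ ‖c * W‖ := Complex.re_le_norm _
    _ = ‖W‖ := habs
end
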